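/- arXiv:1910.05353 — 4 statements merged into one kernel-verified Lean document; each statement's English description precedes it below -/
import Mathlib

section
/- Let φ satisfy the weight-0, index-t modular law. Then for all integers r, s and every τ in the upper half-plane, the specialization χ_{r,s} satisfies χ_{r,s}(−1/τ) = exp(−4πi·r·s·t/b²) · χ_{s,−r}(τ). -/
open Complex

/-- The specialization `χ_{r,s}(τ) := exp(2πi·t·r²·τ/b²) · φ(τ, (rτ+s)/b)`. -/
noncomputable def chi (t b : ℤ) (φ : ℂ → ℂ → ℂ) (r s : ℤ) (τ : ℂ) : ℂ :=
  Complex.exp (2 * Real.pi * Complex.I * t * r ^ 2 * τ / b ^ 2) * φ τ ((r * τ + s) / b)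

/-- If `φ` satisfies the weight-0, index-`t` modular law, then
`χ_{r,s}(−1/τ) = exp(−4πi·r·s·t/b²) · χ_{s,−r}(τ)` for all `τ` in the upper half-plane. -/
theorem chi_S_transform (t b : ℤ) (ht : 1 ≤ t) (hb : 1 ≤ b) (φ : ℂ → ℂ → ℂ)
    (hmod : ∀ a β c d : ℤ, a * d - β * c = 1 → ∀ τ z : ℂ, 0 < τ.im →
      φ ((a * τ + β) / (c * τ + d)) (z / (c * τ + d)) =
        Complex.exp (2 * Real.pi * Complex.I * t * c * z ^ 2 / (c * τ + d)) * φ τ z) :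
    ∀ r s : ℤ, ∀ τ : ℂ, 0 < τ.im →
      chi t b φ r s (-1 / τ) =
        Complex.exp (-(4 * Real.pi * Complex.I * r * s * t) / b ^ 2) * chi t b φ s (-r) τ := by
  intro r s τ hτ
  have hτ0 : τ ≠ 0 := fun h => by simp [h] at hτ
  have hb0 : (b : ℂ) ≠ 0 := by
    have : (0:ℤ) < b := hb
    exact_mod_cast this.ne'
  have key := hmod 0 (-1) 1 0 (by ring) τ (((s : ℂ) * τ - r) / b) hτ
  push_cast at key
  rw [zero_mul, zero_add, one_mul, add_zero] at key
  unfold chi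
  have h1 : ((r : ℂ) * (-1 / τ) + s) / b = (((s : ℂ) * τ - r) / b) / τ := by
    field_simp; ring
  push_cast
  rw [h1, key, ← mul_assoc, ← Complex.exp_add, ← mul_assoc, ← Complex.exp_add]
  congr 2
  field_simp
  ring
end

section
/- Let φ satisfy both the weight-0, index-t modular law and the index-t elliptic law. Then for all integers r, s there exist a matrix g ∈ SL(2,ℤ), an integer r′, and a complex number u with |u| = 1, such that χ_{r,s}(g·τ) = u · χ_{r′,0}(τ) for every τ in the upper half-plane (where g acts on ℍ by Möbius transformation). -/
open Complex

lemma chi_key (t b : ℤ) (φ : ℂ → ℂ → ℂ)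
    (hmod : ∀ a β c d : ℤ, a * d - β * c = 1 → ∀ τ z : ℂ, 0 < τ.im →
      φ ((a * τ + β) / (c * τ + d)) (z / (c * τ + d)) =
        Complex.exp (2 * Real.pi * Complex.I * t * c * z ^ 2 / (c * τ + d)) * φ τ z)
    (r s a β c d : ℤ) (hb : (b:ℂ) ≠ 0) (hdet : a * d - β * c = 1)
    (hrel : r * β + s * d = 0) (τ : ℂ) (hτ : 0 < τ.im) :
    chi t b φ r s (((a:ℂ) * τ + β) / ((c:ℂ) * τ + d)) =
      Complex.exp (2 * Real.pi * Complex.I * t * ((r*a+s*c:ℤ):ℂ)^2 * d * β / b^2) *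
        chi t b φ (r*a+s*c) 0 τ := by
  have hD : (c:ℂ) * τ + d ≠ 0 := by
    rcases eq_or_ne c 0 with hc | hc
    · subst hc
      have hd0 : d ≠ 0 := by rintro rfl; simp at hdet
      simp only [Int.cast_zero, zero_mul, zero_add]
      exact_mod_cast hd0
    · intro h
      have him := congrArg Complex.im h
      simp [Complex.add_im, Complex.mul_im] at him
      rcases him with h1 | h1
      · exact hc h1
      · exact absurd h1.symm hτ.ne
  have hD' : τ * (c:ℂ) + d ≠ 0 := by rwa [mul_comm] at hD
  have hrd : ((r:ℂ)) = ((r*a+s*c:ℤ):ℂ) * d := by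
    have : (r*a+s*c) * d = r := by linear_combination r * hdet + c * hrel
    exact_mod_cast this.symm
  have hrelC : (r:ℂ) * β + s * d = 0 := by exact_mod_cast hrel
  have hdetC : (a:ℂ) * d - β * c = 1 := by exact_mod_cast hdet
  have hz : ((r:ℂ) * (((a:ℂ) * τ + β) / ((c:ℂ) * τ + d)) + s) / b =
      (((r*a+s*c:ℤ):ℂ) * τ / b) / ((c:ℂ) * τ + d) := by
    field_simp
    push_cast
    linear_combination hrelC
  rw [chi, chi, hz, hmod a β c d hdet τ (((r*a+s*c:ℤ):ℂ) * τ / b) hτ]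
  have hφ : (((r*a+s*c:ℤ):ℂ) * τ + ((0:ℤ):ℂ)) / b = ((r*a+s*c:ℤ):ℂ) * τ / b := by
    push_cast; ring
  rw [hφ]
  rw [← mul_assoc, ← mul_assoc]
  congr 1
  rw [← Complex.exp_add, ← Complex.exp_add]
  congr 1
  have hmain : (((r*a+s*c:ℤ):ℂ)*d)^2 * (((a:ℂ)*τ+β)/((c:ℂ)*τ+d)) / b^2 +
      (c:ℂ) * (((r*a+s*c:ℤ):ℂ)*τ/b)^2 / ((c:ℂ)*τ+d) =
      ((r*a+s*c:ℤ):ℂ)^2*d*β/b^2 + ((r*a+s*c:ℤ):ℂ)^2*τ/b^2 := by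
    field_simp
    push_cast
    ring_nf
    linear_combination ((r:ℂ)*a+s*c)^2 * d * τ * hdetC
  calc 2 * ↑Real.pi * Complex.I * ↑t * (r:ℂ) ^ 2 * (((a:ℂ) * τ + β) / ((c:ℂ) * τ + d)) / (b:ℂ) ^ 2 +
        2 * ↑Real.pi * Complex.I * ↑t * (c:ℂ) * (((r*a+s*c:ℤ):ℂ) * τ / b) ^ 2 / ((c:ℂ) * τ + d)
      = 2 * ↑Real.pi * Complex.I * ↑t *
          ((((r*a+s*c:ℤ):ℂ)*d)^2 * (((a:ℂ)*τ+β)/((c:ℂ)*τ+d)) / b^2 +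
            (c:ℂ) * (((r*a+s*c:ℤ):ℂ)*τ/b)^2 / ((c:ℂ)*τ+d)) := by
        rw [hrd]; ring
    _ = 2 * ↑Real.pi * Complex.I * ↑t *
          (((r*a+s*c:ℤ):ℂ)^2*d*β/b^2 + ((r*a+s*c:ℤ):ℂ)^2*τ/b^2) := by rw [hmain]
    _ = 2 * ↑Real.pi * Complex.I * ↑t * ((r*a+s*c:ℤ):ℂ) ^ 2 * ↑d * ↑β / ↑b ^ 2 +
        2 * ↑Real.pi * Complex.I * ↑t * ((r*a+s*c:ℤ):ℂ) ^ 2 * τ / ↑b ^ 2 := by ring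

/-- If `φ` satisfies both the weight-0, index-`t` modular law and the index-`t`
elliptic law, then any `χ_{r,s}` can be related, via a Möbius transformation by some
`g ∈ SL(2,ℤ)` and a phase `u` of modulus one, to some `χ_{r',0}`. -/
theorem chi_related_to_s_zero (t b : ℤ) (ht : 1 ≤ t) (hb : 1 ≤ b) (φ : ℂ → ℂ → ℂ)
    (hmod : ∀ a β c d : ℤ, a * d - β * c = 1 → ∀ τ z : ℂ, 0 < τ.im →
      φ ((a * τ + β) / (c * τ + d)) (z / (c * τ + d)) =
        Complex.exp (2 * Real.pi * Complex.I * t * c * z ^ 2 / (c * τ + d)) * φ τ z)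
    (hell : ∀ lam mu : ℤ, ∀ τ z : ℂ, 0 < τ.im →
      φ τ (z + lam * τ + mu) =
        Complex.exp (-(2 * Real.pi * Complex.I * t * (lam ^ 2 * τ + 2 * lam * z + mu))) * φ τ z) :
    ∀ r s : ℤ, ∃ g : Matrix.SpecialLinearGroup (Fin 2) ℤ, ∃ r' : ℤ, ∃ u : ℂ,
      ‖u‖ = 1 ∧
      ∀ τ : ℂ, 0 < τ.im →
        chi t b φ r s ((g 0 0 * τ + g 0 1) / (g 1 0 * τ + g 1 1)) =
          u * chi t b φ r' 0 τ := by
  intro r s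
  have hbC : (b:ℂ) ≠ 0 := by
    have : b ≠ 0 := by omega
    exact_mod_cast this
  obtain ⟨a, β, c, d, hdet, hrel⟩ :
      ∃ a β c d : ℤ, a * d - β * c = 1 ∧ r * β + s * d = 0 := by
    rcases eq_or_ne (Int.gcd r s) 0 with hg | hg
    · have h0 := Int.gcd_eq_zero_iff.mp hg
      exact ⟨1, 0, 0, 1, by ring, by simp [h0.1, h0.2]⟩
    · have hGne : ((Int.gcd r s : ℤ)) ≠ 0 := Int.natCast_ne_zero.mpr hg
      have hab : ((Int.gcd r s : ℤ)) = r * Int.gcdA r s + s * Int.gcdB r s :=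
        Int.gcd_eq_gcd_ab r s
      obtain ⟨d, hd⟩ : ((Int.gcd r s : ℤ)) ∣ r := Int.gcd_dvd_left r s
      obtain ⟨sB, hsB⟩ : ((Int.gcd r s : ℤ)) ∣ s := Int.gcd_dvd_right r s
      refine ⟨Int.gcdA r s, -sB, Int.gcdB r s, d, ?_, ?_⟩
      · refine mul_left_cancel₀ hGne ?_
        rw [mul_one]
        linear_combination (-(Int.gcdA r s)) * hd + (-(Int.gcdB r s)) * hsB - hab
      · linear_combination (-sB) * hd + d * hsB
  refine ⟨⟨!![a, β; c, d], by simp [Matrix.det_fin_two_of, hdet]⟩, r*a+s*c,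
    Complex.exp (2 * Real.pi * Complex.I * t * ((r*a+s*c:ℤ):ℂ)^2 * d * β / b^2), ?_, ?_⟩
  · have hre : (2 * Real.pi * Complex.I * t * ((r*a+s*c:ℤ):ℂ)^2 * d * β / b^2) =
        ((2 * Real.pi * t * ((r*a+s*c:ℤ):ℝ)^2 * d * β / b^2 : ℝ) : ℂ) * Complex.I := by
      push_cast; ring
    rw [hre, Complex.norm_exp_ofReal_mul_I]
  · intro τ hτ
    have := chi_key t b φ hmod r s a β c d hbC hdet hrel τ hτ
    simpa [Matrix.cons_val_zero, Matrix.cons_val_one, Matrix.head_cons] using this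
end

section
/- Let t ≥ 1 be an integer and let c : ℤ×ℤ → ℂ satisfy the shift identity c(n, l) = c(n + lλ + tλ², l + 2tλ) for all integers n, l, λ, together with c(n, l) = 0 whenever n < 0. Then c(n, l) = 0 whenever the discriminant satisfies 4tn − l² < −t². -/
/-- If `c` satisfies the shift identity `c(n,l) = c(n + lλ + tλ², l + 2tλ)` and
vanishes for `n < 0`, then `c(n,l) = 0` whenever `4tn − l² < −t²`. -/
theorem weak_jacobi_polarity_bound (t : ℤ) (ht : 1 ≤ t) (c : ℤ → ℤ → ℂ)
    (hshift : ∀ n l lam : ℤ, c n l = c (n + l * lam + t * lam ^ 2) (l + 2 * t * lam))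
    (hvanish : ∀ n l : ℤ, n < 0 → c n l = 0) :
    ∀ n l : ℤ, 4 * t * n - l ^ 2 < -t ^ 2 → c n l = 0 := by
  intro n l hd
  set lam : ℤ := (t - l) / (2 * t) with hlam
  have ht2 : (0:ℤ) < 2 * t := by linarith
  have h1 : lam * (2 * t) ≤ t - l := Int.ediv_mul_le _ (ne_of_gt ht2)
  have h2 : t - l < (lam + 1) * (2 * t) := Int.lt_ediv_add_one_mul_self _ ht2
  -- bounds on the new l
  have hub : l + 2 * t * lam ≤ t := by nlinarith
  have hlb : -t < l + 2 * t * lam := by nlinarith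
  have hl'sq : (l + 2 * t * lam) ^ 2 ≤ t ^ 2 := by nlinarith
  have hinv : 4 * t * (n + l * lam + t * lam ^ 2) - (l + 2 * t * lam) ^ 2
      = 4 * t * n - l ^ 2 := by ring
  have hneg : n + l * lam + t * lam ^ 2 < 0 := by nlinarith
  rw [hshift n l lam]
  exact hvanish _ _ hneg
end

section
/- Let Γ be a finite-index subgroup of SL(2,ℤ) and let h : ℍ → ℂ be a holomorphic function on the upper half-plane such that h(γ·τ) = h(τ) for every γ ∈ Γ and τ ∈ ℍ (where γ acts by Möbius transformation). Suppose further that for every g ∈ SL(2,ℤ) the function τ ↦ h(g·τ) is bounded on the set {τ ∈ ℍ : Im τ ≥ 1}. Then h is constant. -/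
open Complex

section IBHAux

open UpperHalfPlane Filter Function MatrixGroups Asymptotics Metric
open scoped Real MatrixGroups

/-- Bridge: coercion of the SL(2,ℤ) Möbius action to the explicit formula. -/
lemma IBH.smul_coe (g : SL(2, ℤ)) (τ : ℍ) :
    ((g • τ : ℍ) : ℂ) = ((g 0 0 : ℂ) * τ + g 0 1) / ((g 1 0 : ℂ) * τ + g 1 1) := by
  rw [ModularGroup.sl_moeb, UpperHalfPlane.coe_smul_of_det_pos (by simp)]
  simp [UpperHalfPlane.num, UpperHalfPlane.denom]


end IBHAux
open Complex UpperHalfPlane Filter Function MatrixGroups Asymptotics Metric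
open scoped Real

local notation "I∞" => Filter.comap Complex.im Filter.atTop

lemma IBH.strip_max {N : ℝ} (hN : 0 < N) {K : ℂ → ℂ} (hper : Function.Periodic K (N : ℂ))
    (hdiff : ∀ z : ℂ, 0 < z.im → DifferentiableAt ℂ K z)
    (hbd : Filter.BoundedAtFilter I∞ K) :
    ∃ w : ℂ, (1/2 ≤ w.im) ∧ ∀ z : ℂ, 1/2 ≤ z.im → ‖K z‖ ≤ ‖K w‖ := by
  set C1 : Set ℂ := Complex.re ⁻¹' (Set.Icc 0 N) ∩ Complex.im ⁻¹' (Set.Icc (1/2) 1) with hC1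
  have hC1closed : IsClosed C1 :=
    (isClosed_Icc.preimage Complex.continuous_re).inter
      (isClosed_Icc.preimage Complex.continuous_im)
  have hC1bdd : Bornology.IsBounded C1 := by
    refine (Metric.isBounded_closedBall (x := (0:ℂ)) (r := N + 1)).subset fun z hz => ?_
    obtain ⟨⟨h1, h2⟩, h3, h4⟩ := hz
    simp only [Metric.mem_closedBall, Complex.dist_eq, sub_zero]
    calc ‖z‖ ≤ |z.re| + |z.im| := Complex.norm_le_abs_re_add_abs_im z
      _ ≤ N + 1 := by
        rw [_root_.abs_of_nonneg h1, _root_.abs_of_nonneg (le_trans (by norm_num) h3)]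
        exact add_le_add h2 h4
  have hC1cpt : IsCompact C1 := Metric.isCompact_of_isClosed_isBounded hC1closed hC1bdd
  have hC1ne : C1.Nonempty := ⟨Complex.I / 2, by
    constructor <;> simp <;> norm_num [hN.le]⟩
  have hC1pos : ∀ z ∈ C1, 0 < z.im := fun z hz => lt_of_lt_of_le (by norm_num) hz.2.1
  obtain ⟨w, hwC, hwmax⟩ := hC1cpt.exists_isMaxOn hC1ne
    (fun z hz => ((hdiff z (hC1pos z hz)).continuousAt.norm).continuousWithinAt)
  refine ⟨w, hwC.2.1, ?_⟩
  -- Step A : reduction to the rectangle for `1/2 ≤ im z ≤ 1`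
  have stepA : ∀ z : ℂ, 1/2 ≤ z.im → z.im ≤ 1 → ‖K z‖ ≤ ‖K w‖ := by
    intro z hz1 hz2
    set w' : ℂ := z - (⌊z.re / N⌋ : ℤ) * (N : ℂ) with hw'
    have hKz : K w' = K z := hper.sub_int_mul_eq ⌊z.re / N⌋
    have hfl : (⌊z.re / N⌋ : ℝ) * N ≤ z.re := by
      calc (⌊z.re / N⌋ : ℝ) * N ≤ (z.re / N) * N :=
            mul_le_mul_of_nonneg_right (Int.floor_le _) hN.le
        _ = z.re := div_mul_cancel₀ _ hN.ne'
    have hfl2 : z.re ≤ (⌊z.re / N⌋ : ℝ) * N + N := by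
      have h := (Int.lt_floor_add_one (z.re / N)).le
      calc z.re = (z.re / N) * N := (div_mul_cancel₀ _ hN.ne').symm
        _ ≤ ((⌊z.re / N⌋ : ℝ) + 1) * N := mul_le_mul_of_nonneg_right h hN.le
        _ = (⌊z.re / N⌋ : ℝ) * N + N := by ring
    have hw're : w'.re = z.re - (⌊z.re / N⌋ : ℝ) * N := by
      simp [hw', Complex.sub_re, Complex.mul_re]
    have hw'im : w'.im = z.im := by
      simp [hw', Complex.sub_im, Complex.mul_im]
    have hw'C : w' ∈ C1 := by
      refine ⟨⟨?_, ?_⟩, ?_, ?_⟩ <;> simp only [Set.mem_preimage, hw're, hw'im] <;> linarith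
    calc ‖K z‖ = ‖K w'‖ := by rw [hKz]
      _ ≤ ‖K w‖ := hwmax hw'C
  -- the cusp function
  set F : ℂ → ℂ := Function.Periodic.cuspFunction N K with hF
  have hFdiff : DifferentiableOn ℂ F (Metric.ball 0 1) := by
    intro q hq
    rw [Metric.mem_ball, Complex.dist_eq, sub_zero] at hq
    rcases eq_or_ne q 0 with rfl | hq'
    · refine (Function.Periodic.differentiableAt_cuspFunction_zero hN hper ?_ hbd).differentiableWithinAt
      filter_upwards [Filter.preimage_mem_comap (Filter.Ici_mem_atTop 1)] with z hz
      exact hdiff z (lt_of_lt_of_le one_pos hz)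
    · have him : 0 < (Function.Periodic.invQParam N q).im :=
        Function.Periodic.im_invQParam_pos_of_norm_lt_one hN hq hq'
      rw [← Function.Periodic.qParam_right_inv hN.ne' hq']
      exact (Function.Periodic.differentiableAt_cuspFunction hN.ne' hper
        (hdiff _ him)).differentiableWithinAt
  set ρ : ℝ := Real.exp (-2 * π / N) with hρ
  have hρpos : 0 < ρ := Real.exp_pos _
  have hρlt : ρ < 1 := by
    rw [hρ, Real.exp_lt_one_iff]
    exact div_neg_of_neg_of_pos (by nlinarith [Real.pi_pos]) hN
  -- max modulus on the closed ball of radius ρ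
  have maxmod : ∀ q ∈ Metric.closedBall (0:ℂ) ρ, ‖F q‖ ≤ ‖K w‖ := by
    intro q hq
    have hcl : closure (Metric.ball (0:ℂ) ρ) = Metric.closedBall 0 ρ := closure_ball _ hρpos.ne'
    refine Complex.norm_le_of_forall_mem_frontier_norm_le Metric.isBounded_ball
      (DifferentiableOn.diffContOnCl ?_) ?_ (by rwa [hcl])
    · rw [hcl]
      exact hFdiff.mono (Metric.closedBall_subset_ball hρlt)
    · intro q' hq'
      rw [frontier_ball _ hρpos.ne'] at hq'
      have habs : ‖q'‖ = ρ := by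
        simpa [Complex.dist_eq] using hq'
      have hq'ne : q' ≠ 0 := by
        intro hcon; rw [hcon] at habs; simp at habs; exact hρpos.ne habs
      have him : (Function.Periodic.invQParam N q').im = 1 := by
        rw [Function.Periodic.im_invQParam, habs, hρ, Real.log_exp]
        field_simp
      have : F q' = K (Function.Periodic.invQParam N q') := by
        conv_lhs => rw [← Function.Periodic.qParam_right_inv hN.ne' hq'ne]
        exact hper.eq_cuspFunction hN.ne' _
      rw [this]
      exact stepA _ (by rw [him]; norm_num) (by rw [him])
  -- conclusion
  intro z hz
  rcases le_or_gt z.im 1 with hz2 | hz2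
  · exact stepA z hz hz2
  · have : K z = F (Function.Periodic.qParam N z) := (hper.eq_cuspFunction hN.ne' z).symm
    rw [this]
    refine maxmod _ ?_
    rw [Metric.mem_closedBall, Complex.dist_eq, sub_zero,
      Function.Periodic.norm_qParam, hρ]
    apply Real.exp_le_exp.mpr
    have h2 : -2 * π * z.im ≤ -2 * π := by nlinarith [Real.pi_pos]
    exact (div_le_div_iff_of_pos_right hN).mpr h2


/-- A holomorphic function on the upper half-plane which is invariant under a
finite-index subgroup `Γ` of `SL(2,ℤ)` and bounded near every cusp (i.e. for every
`g ∈ SL(2,ℤ)` the function `τ ↦ h(g·τ)` is bounded on `{Im τ ≥ 1}`) is constant. -/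
theorem invariant_bounded_holomorphic_is_constant
    (Γ : Subgroup (Matrix.SpecialLinearGroup (Fin 2) ℤ)) (hΓ : Γ.FiniteIndex)
    (h : ℂ → ℂ)
    (hhol : DifferentiableOn ℂ h {τ : ℂ | 0 < τ.im})
    (hinv : ∀ γ ∈ Γ, ∀ τ : ℂ, 0 < τ.im →
      h ((γ 0 0 * τ + γ 0 1) / (γ 1 0 * τ + γ 1 1)) = h τ)
    (hbdd : ∀ g : Matrix.SpecialLinearGroup (Fin 2) ℤ, ∃ M : ℝ, ∀ τ : ℂ, 1 ≤ τ.im →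
      ‖h ((g 0 0 * τ + g 0 1) / (g 1 0 * τ + g 1 1))‖ ≤ M) :
    ∃ C : ℂ, ∀ τ : ℂ, 0 < τ.im → h τ = C := by
  classical
  haveI := hΓ
  set Γ' := Γ.normalCore with hΓ'def
  haveI hnorm : Γ'.Normal := Subgroup.normalCore_normal Γ
  haveI : Γ'.FiniteIndex := by rw [hΓ'def]; exact Subgroup.finiteIndex_normalCore Γ
  set N : ℕ := Γ'.index with hNdef
  have hNpos : 0 < (N : ℝ) := by
    exact_mod_cast Nat.pos_of_ne_zero Subgroup.FiniteIndex.index_ne_zero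
  have hUopen : IsOpen {z : ℂ | 0 < z.im} := isOpen_lt continuous_const Complex.continuous_im
  -- invariance on ℍ
  have hinv' : ∀ γ ∈ Γ', ∀ τ : ℍ, h ↑(γ • τ) = h ↑τ := by
    intro γ hγ τ
    rw [IBH.smul_coe]
    exact hinv γ (Γ.normalCore_le hγ) τ τ.2
  set K : SL(2, ℤ) → ℂ → ℂ := fun g z => h ↑(g • ofComplex z) with hK
  -- periodicity
  have hper : ∀ g : SL(2, ℤ), Function.Periodic (K g) (((N : ℝ)) : ℂ) := by
    have hTmem : ModularGroup.T ^ (N : ℤ) ∈ Γ' := by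
      rw [zpow_natCast]
      exact Subgroup.pow_index_mem Γ' ModularGroup.T
    intro g z
    by_cases hz : 0 < z.im
    · have hz' : 0 < (z + ((N : ℝ) : ℂ)).im := by simpa using hz
      show h ↑(g • ofComplex (z + ((N : ℝ) : ℂ))) = h ↑(g • ofComplex z)
      have hT : ofComplex (z + ((N : ℝ) : ℂ)) = ModularGroup.T ^ (N : ℤ) • ofComplex z := by
        rw [UpperHalfPlane.modular_T_zpow_smul]
        apply UpperHalfPlane.ext
        rw [UpperHalfPlane.coe_vadd, ofComplex_apply_of_im_pos hz,
          ofComplex_apply_of_im_pos hz', UpperHalfPlane.coe_mk_subtype,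
          UpperHalfPlane.coe_mk_subtype]
        push_cast
        ring
      rw [hT, ← mul_smul]
      have hconj : g * ModularGroup.T ^ (N : ℤ) =
          (g * ModularGroup.T ^ (N : ℤ) * g⁻¹) * g := by group
      rw [hconj, mul_smul]
      exact hinv' _ (hnorm.conj_mem _ hTmem g) _
    · push_neg at hz
      have hz' : (z + ((N : ℝ) : ℂ)).im ≤ 0 := by simpa using hz
      show h ↑(g • ofComplex (z + ((N : ℝ) : ℂ))) = h ↑(g • ofComplex z)
      rw [ofComplex_apply_eq_of_im_nonpos hz' hz]
  -- differentiability
  have hdiff : ∀ (g : SL(2, ℤ)) (z : ℂ), 0 < z.im → DifferentiableAt ℂ (K g) z := by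
    intro g z hz
    have heq : Set.EqOn (K g)
        (fun w => h (((g 0 0 : ℂ) * w + g 0 1) / ((g 1 0 : ℂ) * w + g 1 1)))
        {w : ℂ | 0 < w.im} := by
      intro w hw
      show h ↑(g • ofComplex w) = _
      rw [ofComplex_apply_of_im_pos hw, IBH.smul_coe, UpperHalfPlane.coe_mk_subtype]
    have he : ((g • ofComplex z : ℍ) : ℂ)
        = ((g 0 0 : ℂ) * z + g 0 1) / ((g 1 0 : ℂ) * z + g 1 1) := by
      rw [ofComplex_apply_of_im_pos hz, IBH.smul_coe, UpperHalfPlane.coe_mk_subtype]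
    have hdenom : ((g 1 0 : ℂ) * z + g 1 1) ≠ 0 := by
      have h0 := UpperHalfPlane.denom_ne_zero (g : GL (Fin 2) ℝ) (ofComplex z)
      rwa [ModularGroup.denom_apply, ofComplex_apply_of_im_pos hz,
        UpperHalfPlane.coe_mk_subtype] at h0
    have him : 0 < (((g 0 0 : ℂ) * z + g 0 1) / ((g 1 0 : ℂ) * z + g 1 1)).im := by
      rw [← he]
      exact (g • ofComplex z : ℍ).2
    have hd1 : DifferentiableAt ℂ
        (fun w : ℂ => ((g 0 0 : ℂ) * w + g 0 1) / ((g 1 0 : ℂ) * w + g 1 1)) z :=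
      DifferentiableAt.div (by fun_prop) (by fun_prop) hdenom
    have hd2 : DifferentiableAt ℂ h (((g 0 0 : ℂ) * z + g 0 1) / ((g 1 0 : ℂ) * z + g 1 1)) :=
      hhol.differentiableAt (hUopen.mem_nhds him)
    exact (DifferentiableAt.comp z hd2 hd1).congr_of_eventuallyEq
      (Filter.eventuallyEq_of_mem (hUopen.mem_nhds hz) heq)
  -- boundedness at infinity
  have hbd : ∀ g : SL(2, ℤ),
      Filter.BoundedAtFilter (Filter.comap Complex.im Filter.atTop) (K g) := by
    intro g
    obtain ⟨M, hM⟩ := hbdd g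
    rw [Filter.BoundedAtFilter, Asymptotics.isBigO_iff]
    refine ⟨M, ?_⟩
    filter_upwards [Filter.preimage_mem_comap (Filter.Ici_mem_atTop 1)] with z hz
    have hz1 : (1 : ℝ) ≤ z.im := hz
    have hz0 : 0 < z.im := lt_of_lt_of_le one_pos hz1
    have : K g z = h (((g 0 0 : ℂ) * z + g 0 1) / ((g 1 0 : ℂ) * z + g 1 1)) := by
      show h ↑(g • ofComplex z) = _
      rw [ofComplex_apply_of_im_pos hz0, IBH.smul_coe, UpperHalfPlane.coe_mk_subtype]
    rw [this]
    simpa using hM z hz1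
  -- choose maximizers on strips, one for each coset
  choose w hw1 hw2 using
    fun i : SL(2, ℤ) ⧸ Γ' => IBH.strip_max hNpos (hper i.out) (hdiff i.out) (hbd i.out)
  haveI : Finite (SL(2, ℤ) ⧸ Γ') := Subgroup.finite_quotient_of_finiteIndex
  obtain ⟨i0, hi0⟩ := Finite.exists_max (fun i : SL(2, ℤ) ⧸ Γ' => ‖K i.out (w i)‖)
  set g0 : SL(2, ℤ) := i0.out with hg0
  set z0 : ℂ := w i0 with hz0def
  have hz0 : 0 < z0.im := lt_of_lt_of_le (by norm_num) (hw1 i0)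
  -- global bound
  have key : ∀ τ : ℍ, ‖h ↑τ‖ ≤ ‖K g0 z0‖ := by
    intro τ
    obtain ⟨γ, hγ⟩ := ModularGroup.exists_one_half_le_im_smul τ
    set i : SL(2, ℤ) ⧸ Γ' := QuotientGroup.mk γ⁻¹ with hidef
    set g : SL(2, ℤ) := i.out with hgdef
    have hδ : g⁻¹ * γ⁻¹ ∈ Γ' := by
      refine QuotientGroup.eq.mp ?_
      rw [hgdef, hidef]
      exact Quotient.out_eq _
    have hstep : h ↑τ = h ↑(g • (γ • τ)) := by
      conv_lhs => rw [← inv_smul_smul γ τ]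
      have hdecomp : γ⁻¹ = (g * (g⁻¹ * γ⁻¹) * g⁻¹) * g := by group
      rw [hdecomp, mul_smul]
      exact hinv' _ (hnorm.conj_mem _ hδ g) _
    have hKg : h ↑(g • (γ • τ)) = K g ↑(γ • τ) := by
      show _ = h ↑(g • ofComplex ↑(γ • τ))
      rw [ofComplex_apply]
    rw [hstep, hKg]
    calc ‖K g ↑(γ • τ)‖ ≤ ‖K g (w i)‖ := by
          refine hw2 i _ ?_
          rwa [UpperHalfPlane.coe_im]
      _ ≤ ‖K g0 z0‖ := hi0 i
  -- maximum modulus principle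
  have hc0mem : ((g0 • ofComplex z0 : ℍ) : ℂ) ∈ {z : ℂ | 0 < z.im} :=
    (g0 • ofComplex z0 : ℍ).2
  have hKg0 : K g0 z0 = h ↑(g0 • ofComplex z0) := rfl
  have hmax : IsMaxOn (norm ∘ h) {z : ℂ | 0 < z.im} ↑(g0 • ofComplex z0) := by
    intro z hz
    have h1 := key (ofComplex z)
    rw [ofComplex_apply_of_im_pos hz, UpperHalfPlane.coe_mk_subtype] at h1
    simpa [Function.comp, hKg0] using h1
  have heqon := Complex.eqOn_of_isPreconnected_of_isMaxOn_norm
    (convex_halfSpace_im_gt 0).isPreconnected hUopen hhol hc0mem hmax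
  exact ⟨h ↑(g0 • ofComplex z0), fun τ hτ => heqon hτ⟩
end
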